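/- arXiv:2512.16594 — 3 statements merged into one kernel-verified Lean document; each statement's English description precedes it below -/
import Mathlib

section
/- For every natural number n ≥ 2 and every element x of a commutative ℚ-algebra, the top-right entry of the matrix power [[0, x], [x, 2]]^n equals ∑_{k=0}^{⌊(n-1)/2⌋} ∑_{j=0}^{k} C(n, 2k+1)·C(k, j)·x^(2j+1). -/
theorem matrix_power_top_right_entry (R : Type*) [CommRing R] [Algebra ℚ R] (x : R) (n : ℕ)
    (hn : 2 ≤ n) :
    ((!![0, x; x, 2] : Matrix (Fin 2) (Fin 2) R) ^ n) 0 1 =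
      ∑ k ∈ Finset.range ((n - 1) / 2 + 1), ∑ j ∈ Finset.range (k + 1),
        (n.choose (2 * k + 1) : R) * (k.choose j : R) * x ^ (2 * j + 1) := by
  set S : Matrix (Fin 2) (Fin 2) R := !![-1, x; x, 1] with hSdef
  have hM : (!![0, x; x, 2] : Matrix (Fin 2) (Fin 2) R) = S + 1 := by
    ext i j; fin_cases i <;> fin_cases j <;> simp [hSdef, Matrix.one_apply] <;> ring
  have hS2 : S ^ 2 = (1 + x ^ 2) • (1 : Matrix (Fin 2) (Fin 2) R) := by
    ext i j; fin_cases i <;> fin_cases j <;>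
      simp [hSdef, pow_two, Matrix.mul_apply, Fin.sum_univ_two, Matrix.one_apply] <;> ring
  have hodd : ∀ k : ℕ, S ^ (2 * k + 1) = ((1 + x ^ 2) ^ k) • S := by
    intro k
    rw [pow_succ, pow_mul, hS2, smul_pow, one_pow, smul_mul_assoc, one_mul]
  have heven : ∀ k : ℕ, S ^ (2 * k) = ((1 + x ^ 2) ^ k) • (1 : Matrix (Fin 2) (Fin 2) R) := by
    intro k
    rw [pow_mul, hS2, smul_pow, one_pow]
  have hbin : (S + 1) ^ n = ∑ i ∈ Finset.range (n + 1), (n.choose i) • S ^ i := by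
    rw [(Commute.one_right S).add_pow]
    refine Finset.sum_congr rfl fun i _ => ?_
    rw [one_pow, mul_one, nsmul_eq_mul]
    exact ((Nat.cast_commute (n.choose i) (S ^ i)).eq).symm
  rw [hM, hbin]
  have happ : ((∑ i ∈ Finset.range (n + 1), (n.choose i) • S ^ i) 0 1)
      = ∑ i ∈ Finset.range (n + 1), (n.choose i : R) * (S ^ i) 0 1 := by
    rw [Matrix.sum_apply]
    refine Finset.sum_congr rfl fun i _ => ?_
    simp [nsmul_eq_mul]
  rw [happ]
  rw [← Finset.sum_filter_add_sum_filter_not (Finset.range (n + 1)) (fun i => Odd i)]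
  have hz : ∑ i ∈ (Finset.range (n + 1)).filter (fun i => ¬ Odd i),
      (n.choose i : R) * (S ^ i) 0 1 = 0 := by
    refine Finset.sum_eq_zero fun i hi => ?_
    simp only [Finset.mem_filter, Nat.not_odd_iff_even] at hi
    obtain ⟨k, hk⟩ := hi.2
    have : i = 2 * k := by omega
    rw [this, heven k]
    simp [Matrix.one_apply]
  rw [hz, add_zero]
  have himg : (Finset.range (n + 1)).filter (fun i => Odd i)
      = (Finset.range ((n - 1) / 2 + 1)).image (fun k => 2 * k + 1) := by
    ext i
    simp only [Finset.mem_filter, Finset.mem_range, Finset.mem_image, Nat.odd_iff]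
    constructor
    · rintro ⟨h1, h2⟩; exact ⟨i / 2, by omega, by omega⟩
    · rintro ⟨k, hk1, hk2⟩; omega
  rw [himg, Finset.sum_image (by intro a _ b _ h; simp only at h; omega)]
  refine Finset.sum_congr rfl fun k _ => ?_
  rw [hodd k]
  have hsx : (((1 + x ^ 2) ^ k) • S) 0 1 = (1 + x ^ 2) ^ k * x := by
    simp [hSdef]
  rw [hsx]
  have hpow : (1 + x ^ 2) ^ k = ∑ j ∈ Finset.range (k + 1), (k.choose j : R) * x ^ (2 * j) := by
    rw [add_comm, add_pow]
    refine Finset.sum_congr rfl fun j _ => ?_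
    rw [one_pow, mul_one, ← pow_mul]
    ring
  rw [hpow, Finset.sum_mul, Finset.mul_sum]
  refine Finset.sum_congr rfl fun j _ => ?_
  ring
end

section
/- Let z = x₀ + x₁·i denote a quaternionic variable and let a, b ∈ ℍ be quaternions commuting with j. Define F : ℝ³ → ℍ by F(x₀, x₁, x₂) = exp(x₀)·(cos x₁ + sin x₁ · i)·(a + b·x₂) - (1/2)·exp(x₀)·(cos x₁ - sin x₁ · i)·j·b. Then F satisfies the generalized Cauchy–Riemann equation ∂F/∂x₀ + i·(∂F/∂x₁) + j·(∂F/∂x₂) = 0. -/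
/-- The quaternion unit `i`. -/
noncomputable def qi : Quaternion ℝ := ⟨0, 1, 0, 0⟩

/-- The quaternion unit `j`. -/
noncomputable def qj : Quaternion ℝ := ⟨0, 0, 1, 0⟩

/-- `exp(z) = e^{x₀}(cos x₁ + i sin x₁)`. -/
noncomputable def expz (y₀ y₁ : ℝ) : Quaternion ℝ :=
  ((Real.exp y₀ : ℝ) : Quaternion ℝ) *
    (((Real.cos y₁ : ℝ) : Quaternion ℝ) + ((Real.sin y₁ : ℝ) : Quaternion ℝ) * qi)

/-- `exp(z̄) = e^{x₀}(cos x₁ - i sin x₁)`. -/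
noncomputable def expzbar (y₀ y₁ : ℝ) : Quaternion ℝ :=
  ((Real.exp y₀ : ℝ) : Quaternion ℝ) *
    (((Real.cos y₁ : ℝ) : Quaternion ℝ) - ((Real.sin y₁ : ℝ) : Quaternion ℝ) * qi)

@[simp] lemma qi_re : qi.re = 0 := rfl
@[simp] lemma qi_imI : qi.imI = 1 := rfl
@[simp] lemma qi_imJ : qi.imJ = 0 := rfl
@[simp] lemma qi_imK : qi.imK = 0 := rfl
@[simp] lemma qj_re : qj.re = 0 := rfl
@[simp] lemma qj_imI : qj.imI = 0 := rfl
@[simp] lemma qj_imJ : qj.imJ = 1 := rfl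
@[simp] lemma qj_imK : qj.imK = 0 := rfl

lemma hasDerivAt_coeQ {f : ℝ → ℝ} {f' x : ℝ} (hf : HasDerivAt f f' x) :
    HasDerivAt (fun t => ((f t : ℝ) : Quaternion ℝ)) ((f' : ℝ) : Quaternion ℝ) x := by
  have h := hf.smul_const (1 : Quaternion ℝ)
  have h1 : (fun t => ((f t : ℝ) : Quaternion ℝ)) = fun t => f t • (1 : Quaternion ℝ) := by
    funext t; rw [← Quaternion.coe_one, Quaternion.smul_coe, mul_one]
  rw [h1, show ((f' : ℝ) : Quaternion ℝ) = f' • (1 : Quaternion ℝ) by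
    rw [← Quaternion.coe_one, Quaternion.smul_coe, mul_one]]
  exact h

lemma hd_expz0 (x₀ x₁ : ℝ) : HasDerivAt (fun t => expz t x₁) (expz x₀ x₁) x₀ := by
  unfold expz
  exact (hasDerivAt_coeQ (Real.hasDerivAt_exp x₀)).mul_const _

lemma hd_expzbar0 (x₀ x₁ : ℝ) : HasDerivAt (fun t => expzbar t x₁) (expzbar x₀ x₁) x₀ := by
  unfold expzbar
  exact (hasDerivAt_coeQ (Real.hasDerivAt_exp x₀)).mul_const _

lemma hd_expz1 (x₀ x₁ : ℝ) :
    HasDerivAt (fun t => expz x₀ t)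
      (((Real.exp x₀ : ℝ) : Quaternion ℝ) *
        (((-Real.sin x₁ : ℝ) : Quaternion ℝ) + ((Real.cos x₁ : ℝ) : Quaternion ℝ) * qi)) x₁ := by
  unfold expz
  exact (((hasDerivAt_coeQ (Real.hasDerivAt_cos x₁)).add
    ((hasDerivAt_coeQ (Real.hasDerivAt_sin x₁)).mul_const qi)).const_mul _)

lemma hd_expzbar1 (x₀ x₁ : ℝ) :
    HasDerivAt (fun t => expzbar x₀ t)
      (((Real.exp x₀ : ℝ) : Quaternion ℝ) *
        (((-Real.sin x₁ : ℝ) : Quaternion ℝ) - ((Real.cos x₁ : ℝ) : Quaternion ℝ) * qi)) x₁ := by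
  unfold expzbar
  exact (((hasDerivAt_coeQ (Real.hasDerivAt_cos x₁)).sub
    ((hasDerivAt_coeQ (Real.hasDerivAt_sin x₁)).mul_const qi)).const_mul _)


lemma inv2_coe : (2⁻¹ : Quaternion ℝ) = (((2⁻¹ : ℝ)) : Quaternion ℝ) := by
  rw [show (2 : Quaternion ℝ) = ((2:ℝ) : Quaternion ℝ) by norm_cast, ← Quaternion.coe_inv]

@[simp] lemma inv2_re : (2⁻¹ : Quaternion ℝ).re = 2⁻¹ := by rw [inv2_coe, Quaternion.re_coe]
@[simp] lemma inv2_imI : (2⁻¹ : Quaternion ℝ).imI = 0 := by rw [inv2_coe, Quaternion.imI_coe]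
@[simp] lemma inv2_imJ : (2⁻¹ : Quaternion ℝ).imJ = 0 := by rw [inv2_coe, Quaternion.imJ_coe]
@[simp] lemma inv2_imK : (2⁻¹ : Quaternion ℝ).imK = 0 := by rw [inv2_coe, Quaternion.imK_coe]

set_option maxHeartbeats 2000000 in
theorem exp_steering_monogenic_affine (a b : Quaternion ℝ)
    (ha : a * qj = qj * a) (hb : b * qj = qj * b)
    (F : ℝ → ℝ → ℝ → Quaternion ℝ)
    (hF : ∀ y₀ y₁ y₂ : ℝ, F y₀ y₁ y₂ =
      expz y₀ y₁ * (a + b * ((y₂ : ℝ) : Quaternion ℝ)) -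
        (1 / 2 : Quaternion ℝ) * expzbar y₀ y₁ * qj * b)
    (x₀ x₁ x₂ : ℝ) :
    deriv (fun t => F t x₁ x₂) x₀ + qi * deriv (fun t => F x₀ t x₂) x₁ +
      qj * deriv (fun t => F x₀ x₁ t) x₂ = 0 := by
  have e0 : deriv (fun t => F t x₁ x₂) x₀ =
      expz x₀ x₁ * (a + b * ((x₂ : ℝ) : Quaternion ℝ)) -
        (1 / 2 : Quaternion ℝ) * expzbar x₀ x₁ * qj * b := by
    have h : HasDerivAt (fun t => F t x₁ x₂)
        (expz x₀ x₁ * (a + b * ((x₂ : ℝ) : Quaternion ℝ)) -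
          (1 / 2 : Quaternion ℝ) * expzbar x₀ x₁ * qj * b) x₀ := by
      simp only [hF]
      exact ((hd_expz0 x₀ x₁).mul_const _).sub
        ((((hd_expzbar0 x₀ x₁).const_mul _).mul_const qj).mul_const b)
    exact h.deriv
  have e1 : deriv (fun t => F x₀ t x₂) x₁ =
      (((Real.exp x₀ : ℝ) : Quaternion ℝ) *
        (((-Real.sin x₁ : ℝ) : Quaternion ℝ) + ((Real.cos x₁ : ℝ) : Quaternion ℝ) * qi)) *
        (a + b * ((x₂ : ℝ) : Quaternion ℝ)) -
      (1 / 2 : Quaternion ℝ) * (((Real.exp x₀ : ℝ) : Quaternion ℝ) *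
        (((-Real.sin x₁ : ℝ) : Quaternion ℝ) - ((Real.cos x₁ : ℝ) : Quaternion ℝ) * qi)) *
        qj * b := by
    have h : HasDerivAt (fun t => F x₀ t x₂)
        ((((Real.exp x₀ : ℝ) : Quaternion ℝ) *
          (((-Real.sin x₁ : ℝ) : Quaternion ℝ) + ((Real.cos x₁ : ℝ) : Quaternion ℝ) * qi)) *
          (a + b * ((x₂ : ℝ) : Quaternion ℝ)) -
        (1 / 2 : Quaternion ℝ) * (((Real.exp x₀ : ℝ) : Quaternion ℝ) *
          (((-Real.sin x₁ : ℝ) : Quaternion ℝ) - ((Real.cos x₁ : ℝ) : Quaternion ℝ) * qi)) *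
          qj * b) x₁ := by
      simp only [hF]
      exact ((hd_expz1 x₀ x₁).mul_const _).sub
        ((((hd_expzbar1 x₀ x₁).const_mul _).mul_const qj).mul_const b)
    exact h.deriv
  have e2 : deriv (fun t => F x₀ x₁ t) x₂ = expz x₀ x₁ * b := by
    have h : HasDerivAt (fun t => F x₀ x₁ t)
        (expz x₀ x₁ * (b * (((1:ℝ) : ℝ) : Quaternion ℝ)) - 0) x₂ := by
      simp only [hF]
      exact ((((hasDerivAt_coeQ (hasDerivAt_id x₂)).const_mul b).const_add a).const_mul
        (expz x₀ x₁)).sub (hasDerivAt_const x₂ _)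
    have := h.deriv
    simpa using this
  rw [e0, e1, e2]
  unfold expz expzbar
  ext <;>
    simp only [Quaternion.re_mul, Quaternion.imI_mul, Quaternion.imJ_mul, Quaternion.imK_mul,
      Quaternion.re_add, Quaternion.imI_add, Quaternion.imJ_add, Quaternion.imK_add,
      Quaternion.re_sub, Quaternion.imI_sub, Quaternion.imJ_sub, Quaternion.imK_sub,
      Quaternion.re_coe, Quaternion.imI_coe, Quaternion.imJ_coe, Quaternion.imK_coe,
      Quaternion.re_zero, Quaternion.imI_zero, Quaternion.imJ_zero, Quaternion.imK_zero,
      qi_re, qi_imI, qi_imJ, qi_imK, qj_re, qj_imI, qj_imJ, qj_imK, inv2_re, inv2_imI, inv2_imJ, inv2_imK] <;>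
    norm_num <;> ring
end

section
/- Let H : ℝ → ℍ be a cubic polynomial H(x₂) = h₀ + h₁x₂ + h₂x₂² + h₃x₂³ with quaternion coefficients. Define F : ℝ³ → ℍ by F(x₀,x₁,x₂) = exp(z)·H(x₂) + exp(z̄)·(⅛·(-j·H''') - ½·j·H'(x₂)), where exp(z) = e^{x₀}(cos x₁ + i sin x₁), exp(z̄) = e^{x₀}(cos x₁ - i sin x₁), and H', H''' are derivatives in x₂. Then F satisfies the iterated equation (∂/∂x₀ + i·∂/∂x₁ + j·∂/∂x₂)² F = 0, i.e. F is left bimonogenic. -/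
set_option maxHeartbeats 1000000

/-- The generalized Cauchy–Riemann operator `∂_{x₀} + i ∂_{x₁} + j ∂_{x₂}`. -/
noncomputable def CR (G : ℝ → ℝ → ℝ → Quaternion ℝ) : ℝ → ℝ → ℝ → Quaternion ℝ :=
  fun y₀ y₁ y₂ =>
    deriv (fun t => G t y₁ y₂) y₀ + qi * deriv (fun t => G y₀ t y₂) y₁ +
      qj * deriv (fun t => G y₀ y₁ t) y₂

namespace BimonoAux

@[simp] lemma qi_re : qi.re = 0 := rfl
@[simp] lemma qi_imI : qi.imI = 1 := rfl
@[simp] lemma qi_imJ : qi.imJ = 0 := rfl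
@[simp] lemma qi_imK : qi.imK = 0 := rfl
@[simp] lemma qj_re : qj.re = 0 := rfl
@[simp] lemma qj_imI : qj.imI = 0 := rfl
@[simp] lemma qj_imJ : qj.imJ = 1 := rfl
@[simp] lemma qj_imK : qj.imK = 0 := rfl

/-- The exponential factor `exp(z)`. -/
noncomputable def Ep (y₀ y₁ : ℝ) : Quaternion ℝ :=
  ((Real.exp y₀ : ℝ) : Quaternion ℝ) *
    (((Real.cos y₁ : ℝ) : Quaternion ℝ) + ((Real.sin y₁ : ℝ) : Quaternion ℝ) * qi)

/-- The exponential factor `exp(z̄)`. -/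
noncomputable def Em (y₀ y₁ : ℝ) : Quaternion ℝ :=
  ((Real.exp y₀ : ℝ) : Quaternion ℝ) *
    (((Real.cos y₁ : ℝ) : Quaternion ℝ) - ((Real.sin y₁ : ℝ) : Quaternion ℝ) * qi)

lemma hasDerivAt_coe_mul {f : ℝ → ℝ} {f' t : ℝ} (h : HasDerivAt f f' t) (c : Quaternion ℝ) :
    HasDerivAt (fun s => ((f s : ℝ) : Quaternion ℝ) * c) (((f' : ℝ) : Quaternion ℝ) * c) t := by
  simpa only [Quaternion.coe_mul_eq_smul] using h.smul_const c

lemma hasDerivAt_mul_coe {f : ℝ → ℝ} {f' t : ℝ} (h : HasDerivAt f f' t) (c : Quaternion ℝ) :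
    HasDerivAt (fun s => c * ((f s : ℝ) : Quaternion ℝ)) (c * ((f' : ℝ) : Quaternion ℝ)) t := by
  simpa only [← Quaternion.coe_commutes, Quaternion.coe_mul_eq_smul] using h.smul_const c

/-- Partial derivative in the first variable. -/
lemma hd0 (y₁ : ℝ) (p q : Quaternion ℝ) (y₀ : ℝ) :
    HasDerivAt (fun t => Ep t y₁ * p + Em t y₁ * q) (Ep y₀ y₁ * p + Em y₀ y₁ * q) y₀ := by
  have h1 := hasDerivAt_coe_mul (Real.hasDerivAt_exp y₀)
    ((((Real.cos y₁ : ℝ) : Quaternion ℝ) + ((Real.sin y₁ : ℝ) : Quaternion ℝ) * qi) * p)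
  have h2 := hasDerivAt_coe_mul (Real.hasDerivAt_exp y₀)
    ((((Real.cos y₁ : ℝ) : Quaternion ℝ) - ((Real.sin y₁ : ℝ) : Quaternion ℝ) * qi) * q)
  simpa only [Ep, Em, mul_assoc, Pi.add_def] using h1.add h2

/-- Partial derivative in the second variable. -/
lemma hd1 (y₀ : ℝ) (p q : Quaternion ℝ) (y₁ : ℝ) :
    HasDerivAt (fun t => Ep y₀ t * p + Em y₀ t * q)
      (qi * (Ep y₀ y₁ * p) - qi * (Em y₀ y₁ * q)) y₁ := by
  have hc : ∀ t : ℝ, HasDerivAt (fun s : ℝ => Real.exp y₀ * Real.cos s)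
      (Real.exp y₀ * (-Real.sin t)) t := fun t => (Real.hasDerivAt_cos t).const_mul _
  have hs : ∀ t : ℝ, HasDerivAt (fun s : ℝ => Real.exp y₀ * Real.sin s)
      (Real.exp y₀ * Real.cos t) t := fun t => (Real.hasDerivAt_sin t).const_mul _
  have H := (((hasDerivAt_coe_mul (hc y₁) p).add (hasDerivAt_coe_mul (hs y₁) (qi * p))).add
    ((hasDerivAt_coe_mul (hc y₁) q).sub (hasDerivAt_coe_mul (hs y₁) (qi * q))))
  have hfun : (fun t => Ep y₀ t * p + Em y₀ t * q) =
      (fun t => (((Real.exp y₀ * Real.cos t : ℝ) : Quaternion ℝ) * p +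
          ((Real.exp y₀ * Real.sin t : ℝ) : Quaternion ℝ) * (qi * p)) +
        (((Real.exp y₀ * Real.cos t : ℝ) : Quaternion ℝ) * q -
          ((Real.exp y₀ * Real.sin t : ℝ) : Quaternion ℝ) * (qi * q))) := by
    funext t
    ext <;> simp [Ep, Em] <;> ring
  rw [hfun]
  refine H.congr_deriv ?_
  ext <;> simp [Ep, Em] <;> ring

/-- The key computation: one application of `CR` to a function of the standard shape. -/
lemma CR_shape (p q p' q' : ℝ → Quaternion ℝ)
    (hp : ∀ t, HasDerivAt p (p' t) t) (hq : ∀ t, HasDerivAt q (q' t) t)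
    (y₀ y₁ y₂ : ℝ) :
    CR (fun a b c => Ep a b * p c + Em a b * q c) y₀ y₁ y₂ =
      Em y₀ y₁ * q y₂ + Em y₀ y₁ * q y₂ + Em y₀ y₁ * (qj * p' y₂) +
        Ep y₀ y₁ * (qj * q' y₂) := by
  have d2 : HasDerivAt (fun t => Ep y₀ y₁ * p t + Em y₀ y₁ * q t)
      (Ep y₀ y₁ * p' y₂ + Em y₀ y₁ * q' y₂) y₂ :=
    ((hp y₂).const_mul _).add ((hq y₂).const_mul _)
  unfold CR
  rw [(hd0 y₁ (p y₂) (q y₂) y₀).deriv, (hd1 y₀ (p y₂) (q y₂) y₁).deriv, d2.deriv]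
  ext <;> simp [Ep, Em] <;> ring

end BimonoAux

open BimonoAux in
theorem exp_steering_bimonogenic_cubic (h₀ h₁ h₂ h₃ : Quaternion ℝ)
    (F : ℝ → ℝ → ℝ → Quaternion ℝ)
    (hF : ∀ y₀ y₁ y₂ : ℝ, F y₀ y₁ y₂ =
      ((Real.exp y₀ : ℝ) : Quaternion ℝ) *
          (((Real.cos y₁ : ℝ) : Quaternion ℝ) + ((Real.sin y₁ : ℝ) : Quaternion ℝ) * qi) *
          (h₀ + h₁ * ((y₂ : ℝ) : Quaternion ℝ) + h₂ * ((y₂ : ℝ) : Quaternion ℝ) ^ 2 +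
            h₃ * ((y₂ : ℝ) : Quaternion ℝ) ^ 3) +
        ((Real.exp y₀ : ℝ) : Quaternion ℝ) *
          (((Real.cos y₁ : ℝ) : Quaternion ℝ) - ((Real.sin y₁ : ℝ) : Quaternion ℝ) * qi) *
          ((1 / 8 : Quaternion ℝ) * (-(qj * (6 * h₃))) -
            (1 / 2 : Quaternion ℝ) * qj *
              (h₁ + 2 * h₂ * ((y₂ : ℝ) : Quaternion ℝ) +
                3 * h₃ * ((y₂ : ℝ) : Quaternion ℝ) ^ 2)))
    (x₀ x₁ x₂ : ℝ) :
    CR (CR F) x₀ x₁ x₂ = 0 := by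
  have c8 : ((8 : ℝ) : Quaternion ℝ) = 8 := by norm_cast
  have c2 : ((2 : ℝ) : Quaternion ℝ) = 2 := by norm_cast
  have c3 : ((3 : ℝ) : Quaternion ℝ) = 3 := by norm_cast
  have c4 : ((4 : ℝ) : Quaternion ℝ) = 4 := by norm_cast
  have c6 : ((6 : ℝ) : Quaternion ℝ) = 6 := by norm_cast
  have e8 : (1 / 8 : Quaternion ℝ) = (((1 : ℝ) / 8 : ℝ) : Quaternion ℝ) := by
    rw [Quaternion.coe_div, Quaternion.coe_one, c8]
  have e2 : (1 / 2 : Quaternion ℝ) = (((1 : ℝ) / 2 : ℝ) : Quaternion ℝ) := by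
    rw [Quaternion.coe_div, Quaternion.coe_one, c2]
  have e4 : (1 / 4 : Quaternion ℝ) = (((1 : ℝ) / 4 : ℝ) : Quaternion ℝ) := by
    rw [Quaternion.coe_div, Quaternion.coe_one, c4]
  -- the polynomial parts
  set P : ℝ → Quaternion ℝ := fun c =>
    h₀ + h₁ * ((c : ℝ) : Quaternion ℝ) + h₂ * ((c : ℝ) : Quaternion ℝ) ^ 2 +
      h₃ * ((c : ℝ) : Quaternion ℝ) ^ 3 with hP
  set Q : ℝ → Quaternion ℝ := fun c =>
    (1 / 8 : Quaternion ℝ) * (-(qj * (6 * h₃))) -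
      (1 / 2 : Quaternion ℝ) * qj *
        (h₁ + 2 * h₂ * ((c : ℝ) : Quaternion ℝ) + 3 * h₃ * ((c : ℝ) : Quaternion ℝ) ^ 2) with hQ
  set P' : ℝ → Quaternion ℝ := fun c =>
    h₁ + h₂ * ((2 * c : ℝ) : Quaternion ℝ) + h₃ * ((3 * c ^ 2 : ℝ) : Quaternion ℝ) with hP'
  set Q' : ℝ → Quaternion ℝ := fun c =>
    -((1 / 2 : Quaternion ℝ) * qj *
      (2 * h₂ + 3 * h₃ * ((2 * c : ℝ) : Quaternion ℝ))) with hQ'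
  have hp : ∀ t, HasDerivAt P (P' t) t := by
    intro t
    have H := (((hasDerivAt_const t h₀).add (hasDerivAt_mul_coe (hasDerivAt_id t) h₁)).add
      (hasDerivAt_mul_coe (hasDerivAt_pow 2 t) h₂)).add
      (hasDerivAt_mul_coe (hasDerivAt_pow 3 t) h₃)
    have hfun : P = fun c : ℝ =>
        h₀ + h₁ * ((id c : ℝ) : Quaternion ℝ) + h₂ * ((c ^ 2 : ℝ) : Quaternion ℝ) +
          h₃ * ((c ^ 3 : ℝ) : Quaternion ℝ) := by
      funext c
      rw [hP]
      simp only [id_eq, Quaternion.coe_pow]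
    rw [hfun]
    refine H.congr_deriv ?_
    rw [hP']
    ext <;> simp <;> push_cast <;> ring
  have hq : ∀ t, HasDerivAt Q (Q' t) t := by
    intro t
    have Hin := ((hasDerivAt_const t h₁).add
        (hasDerivAt_mul_coe (hasDerivAt_id t) (2 * h₂))).add
      (hasDerivAt_mul_coe (hasDerivAt_pow 2 t) (3 * h₃))
    have H := (hasDerivAt_const t ((1 / 8 : Quaternion ℝ) * (-(qj * (6 * h₃))))).sub
      (Hin.const_mul ((1 / 2 : Quaternion ℝ) * qj))
    have hfun : Q = fun c : ℝ =>
        (1 / 8 : Quaternion ℝ) * (-(qj * (6 * h₃))) -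
          (1 / 2 : Quaternion ℝ) * qj *
            (h₁ + 2 * h₂ * ((id c : ℝ) : Quaternion ℝ) +
              3 * h₃ * ((c ^ 2 : ℝ) : Quaternion ℝ)) := by
      funext c
      rw [hQ]
      simp only [id_eq, Quaternion.coe_pow]
    rw [hfun]
    refine H.congr_deriv ?_
    rw [hQ', e2]
    ext <;> simp [-Quaternion.coe_inv, -Quaternion.coe_div] <;> push_cast <;> ring
  have hFeq : F = fun a b c => Ep a b * P c + Em a b * Q c := by
    funext a b c
    rw [hF]; rfl
  rw [hFeq]
  -- first application of CR
  have Beq : ∀ c : ℝ, qj * Q' c = h₂ + 3 * h₃ * ((c : ℝ) : Quaternion ℝ) := by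
    intro c
    rw [hQ', e2, ← c2, ← c3]
    ext <;> simp [-Quaternion.coe_inv, -Quaternion.coe_div] <;> push_cast <;> ring
  have Aeq : ∀ c : ℝ, Q c + Q c + qj * P' c =
      (1 / 4 : Quaternion ℝ) * (-(qj * (6 * h₃))) := by
    intro c
    rw [hQ, hP', e8, e2, e4, ← c2, ← c3, ← c6]
    ext <;> simp [-Quaternion.coe_inv, -Quaternion.coe_div] <;> push_cast <;> ring
  have step1 : CR (fun a b c => Ep a b * P c + Em a b * Q c) =
      fun a b c => Ep a b * (h₂ + 3 * h₃ * ((c : ℝ) : Quaternion ℝ)) +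
        Em a b * ((1 / 4 : Quaternion ℝ) * (-(qj * (6 * h₃)))) := by
    funext a b c
    rw [CR_shape P Q P' Q' hp hq a b c, Beq c, ← mul_add, ← mul_add, Aeq c, add_comm]
  rw [step1]
  have hp2 : ∀ t : ℝ, HasDerivAt (fun c : ℝ => h₂ + 3 * h₃ * ((c : ℝ) : Quaternion ℝ))
      ((3 * h₃) * ((1 : ℝ) : Quaternion ℝ)) t := by
    intro t
    have := (hasDerivAt_const t h₂).add (hasDerivAt_mul_coe (hasDerivAt_id t) (3 * h₃))
    simpa [mul_assoc, Pi.add_def] using this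
  have hq2 : ∀ t : ℝ, HasDerivAt
      (fun _ : ℝ => (1 / 4 : Quaternion ℝ) * (-(qj * (6 * h₃)))) (0 : Quaternion ℝ) t :=
    fun t => hasDerivAt_const t _
  rw [CR_shape _ _ _ _ hp2 hq2 x₀ x₁ x₂]
  have Zeq : (1 / 4 : Quaternion ℝ) * (-(qj * (6 * h₃))) +
      (1 / 4 : Quaternion ℝ) * (-(qj * (6 * h₃))) +
      qj * ((3 * h₃) * ((1 : ℝ) : Quaternion ℝ)) = 0 := by
    rw [e4, ← c3, ← c6]
    ext <;> simp [-Quaternion.coe_inv, -Quaternion.coe_div, Quaternion.re_zero, Quaternion.imI_zero, Quaternion.imJ_zero, Quaternion.imK_zero] <;> push_cast <;> ring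
  rw [← mul_add, ← mul_add, Zeq, mul_zero, mul_zero, zero_add, mul_zero]
end
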